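/- Every permutationally symmetric state that is separable across one bipartition is fully separable: if a density matrix ρ on (ℂ^d)^⊗N satisfies P_σ ρ P_σ† = ρ for all permutations σ, ρ is supported on the symmetric subspace (Π⁺ρΠ⁺ = ρ with Π⁺ the projector onto the symmetric subspace), and ρ is separable with respect to some bipartition of the N parties, then ρ is fully separable, i.e., a convex combination of states |a⟩⟨a|^⊗N. -/

import Mathlib

open Matrix
open scoped ComplexOrder

/-- Permutation operator `P_σ` on `(ℂ^d)^⊗N`, acting on coefficient functions by
`(P_σ v) f = v (f ∘ σ)`. -/
noncomputable def permOp (N d : ℕ) (σ : Equiv.Perm (Fin N)) :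
    Matrix (Fin N → Fin d) (Fin N → Fin d) ℂ :=
  fun f g => if g = f ∘ σ then 1 else 0

/-- Projector onto the symmetric subspace of `(ℂ^d)^⊗N`. -/
noncomputable def symProj (N d : ℕ) : Matrix (Fin N → Fin d) (Fin N → Fin d) ℂ :=
  (1 / (Nat.factorial N) : ℂ) • ∑ σ : Equiv.Perm (Fin N), permOp N d σ

open scoped symmDiff

lemma permOp_mulVec (N d : ℕ) (σ : Equiv.Perm (Fin N)) (v : (Fin N → Fin d) → ℂ) (f : Fin N → Fin d) :
    (permOp N d σ *ᵥ v) f = v (f ∘ σ) := by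
  simp [Matrix.mulVec, dotProduct, permOp]

lemma permOp_mul (N d : ℕ) (σ τ : Equiv.Perm (Fin N)) :
    permOp N d σ * permOp N d τ = permOp N d (σ * τ) := by
  ext f g
  simp only [Matrix.mul_apply, permOp]
  rw [Finset.sum_eq_single (f ∘ σ)]
  · have : (f ∘ ⇑σ) ∘ ⇑τ = f ∘ ⇑(σ * τ) := rfl
    rw [if_pos rfl, one_mul, this]
  · intro b _ hb
    rw [if_neg hb, zero_mul]
  · simp

lemma permOp_mul_symProj (N d : ℕ) (σ : Equiv.Perm (Fin N)) :
    permOp N d σ * symProj N d = symProj N d := by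
  unfold symProj
  rw [Matrix.mul_smul, Finset.mul_sum]
  congr 1
  simp_rw [permOp_mul]
  exact Fintype.sum_equiv (Equiv.mulLeft σ) _ _ (fun τ => rfl)

lemma symProj_mul_symProj (N d : ℕ) : symProj N d * symProj N d = symProj N d := by
  have h1 : symProj N d * symProj N d
      = (1 / (Nat.factorial N) : ℂ) • ∑ σ : Equiv.Perm (Fin N), permOp N d σ * symProj N d := by
    conv_lhs => rw [symProj]
    rw [Matrix.smul_mul, Finset.sum_mul]
    rfl
  rw [h1]
  simp_rw [permOp_mul_symProj]
  rw [Finset.sum_const, Finset.card_univ, Fintype.card_perm, Fintype.card_fin,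
    ← Nat.cast_smul_eq_nsmul ℂ, smul_smul, one_div, inv_mul_cancel₀, one_smul]
  exact_mod_cast Nat.cast_ne_zero.2 (Nat.factorial_ne_zero N)

lemma permOp_conjTranspose (N d : ℕ) (σ : Equiv.Perm (Fin N)) :
    (permOp N d σ)ᴴ = permOp N d σ⁻¹ := by
  ext f g
  simp only [Matrix.conjTranspose_apply, permOp, Matrix.star_apply]
  have : (f = g ∘ ⇑σ) = (g = f ∘ ⇑(σ⁻¹)) := by
    apply propext
    constructor
    · rintro rfl; funext i; simp
    · rintro rfl; funext i; simp
  simp only [this]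
  split <;> simp

lemma symProj_conjTranspose (N d : ℕ) : (symProj N d)ᴴ = symProj N d := by
  unfold symProj
  rw [Matrix.conjTranspose_smul, Matrix.conjTranspose_sum]
  simp_rw [permOp_conjTranspose]
  have : (star (1 / (Nat.factorial N) : ℂ)) = (1 / (Nat.factorial N) : ℂ) := by
    rw [Complex.star_def, map_div₀, _root_.map_one, map_natCast]
  rw [this]
  congr 1
  exact Fintype.sum_equiv (Equiv.inv _) _ _ (fun τ => rfl)

lemma tripleswap {α β γ : Type*} [Fintype α] [Fintype β] [Fintype γ] (F : α → β → γ → ℂ) :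
    ∑ a, ∑ b, ∑ c, F a b c = ∑ c, ∑ a, ∑ b, F a b c :=
  (Finset.sum_congr rfl (fun a _ => Finset.sum_comm)).trans Finset.sum_comm

lemma symmetric_of_support {N d : ℕ} {ρ : Matrix (Fin N → Fin d) (Fin N → Fin d) ℂ}
    (hsupp : symProj N d * ρ * symProj N d = ρ)
    {J : Type*} [Fintype J] (q : J → ℝ) (u : J → (Fin N → Fin d) → ℂ)
    (hq : ∀ j, 0 ≤ q j)
    (hdec : ∀ f g, ρ f g = ∑ j, (q j : ℂ) * (u j f * (starRingEnd ℂ) (u j g)))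
    (j : J) (hj : q j ≠ 0) : ∀ (σ : Equiv.Perm (Fin N)) f, u j (f ∘ σ) = u j f := by
  classical
  set Pr := symProj N d with hPr
  set z : (Fin N → Fin d) → ℂ := u j - Pr *ᵥ u j with hzdef
  have hz : Pr *ᵥ z = 0 := by
    rw [hzdef, Matrix.mulVec_sub, Matrix.mulVec_mulVec, hPr, symProj_mul_symProj, sub_self]
  have hQ0 : star z ⬝ᵥ (ρ *ᵥ z) = 0 := by
    conv_lhs => rw [← hsupp]
    rw [← Matrix.mulVec_mulVec, hz, Matrix.mulVec_zero, dotProduct_zero]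
  have expand : star z ⬝ᵥ (ρ *ᵥ z)
      = ∑ j', ((q j' * Complex.normSq (∑ g, (starRingEnd ℂ) (u j' g) * z g) : ℝ) : ℂ) := by
    have e1 : ∀ j', ((q j' * Complex.normSq (∑ g, (starRingEnd ℂ) (u j' g) * z g) : ℝ) : ℂ)
        = (q j' : ℂ) * ((∑ f, (starRingEnd ℂ) (z f) * u j' f) * (∑ g, (starRingEnd ℂ) (u j' g) * z g)) := by
      intro j'
      have hA : (∑ f, (starRingEnd ℂ) (z f) * u j' f)
          = (starRingEnd ℂ) (∑ g, (starRingEnd ℂ) (u j' g) * z g) := by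
        rw [map_sum]
        apply Finset.sum_congr rfl
        intro g _
        rw [_root_.map_mul, Complex.conj_conj, mul_comm]
      rw [hA, ← Complex.normSq_eq_conj_mul_self]
      push_cast
      ring
    simp only [e1]
    simp only [dotProduct, Matrix.mulVec, Pi.star_apply, hdec]
    simp only [Finset.mul_sum, Finset.sum_mul]
    refine (tripleswap _).trans ?_
    apply Finset.sum_congr rfl
    intro j' _
    refine Finset.sum_comm.trans ?_
    apply Finset.sum_congr rfl
    intro f _
    apply Finset.sum_congr rfl
    intro g _
    simp only [Complex.star_def]
    ring
  rw [expand] at hQ0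
  rw [← Complex.ofReal_sum] at hQ0
  have hreal : ∑ j', q j' * Complex.normSq (∑ g, (starRingEnd ℂ) (u j' g) * z g) = 0 := by
    exact_mod_cast hQ0
  have hterm : q j * Complex.normSq (∑ g, (starRingEnd ℂ) (u j g) * z g) = 0 := by
    have := (Finset.sum_eq_zero_iff_of_nonneg (fun j' _ =>
      mul_nonneg (hq j') (Complex.normSq_nonneg _))).1 hreal j (Finset.mem_univ j)
    exact this
  have he : (∑ g, (starRingEnd ℂ) (u j g) * z g) = 0 := by
    have := mul_eq_zero.1 hterm
    rcases this with h | h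
    · exact absurd h hj
    · exact Complex.normSq_eq_zero.1 h
  -- now show ∑ g, conj (u j g) * z g = ∑ g, normSq (z g)
  have hsplit : (∑ g, (starRingEnd ℂ) (u j g) * z g)
      = ∑ g, ((Complex.normSq (z g) : ℝ) : ℂ) := by
    have huz : u j = z + Pr *ᵥ u j := by rw [hzdef, sub_add_cancel]
    have hperp : (∑ g, (starRingEnd ℂ) ((Pr *ᵥ u j) g) * z g) = 0 := by
      have : (star (Pr *ᵥ u j)) ⬝ᵥ z = star (u j) ⬝ᵥ (Pr *ᵥ z) := by
        rw [Matrix.star_mulVec, ← Matrix.dotProduct_mulVec, hPr, symProj_conjTranspose]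
      have h2 : (star (Pr *ᵥ u j)) ⬝ᵥ z = 0 := by
        rw [this, hz, dotProduct_zero]
      simpa [dotProduct, Pi.star_apply] using h2
    calc (∑ g, (starRingEnd ℂ) (u j g) * z g)
        = (∑ g, (starRingEnd ℂ) (z g) * z g) + (∑ g, (starRingEnd ℂ) ((Pr *ᵥ u j) g) * z g) := by
          rw [← Finset.sum_add_distrib]
          apply Finset.sum_congr rfl
          intro g _
          conv_lhs => rw [huz]
          simp [Pi.add_apply, map_add, add_mul]
      _ = ∑ g, ((Complex.normSq (z g) : ℝ) : ℂ) := by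
          rw [hperp, add_zero]
          apply Finset.sum_congr rfl
          intro g _
          rw [← Complex.normSq_eq_conj_mul_self]
  rw [hsplit, ← Complex.ofReal_sum] at he
  have hz0 : ∀ g, z g = 0 := by
    have hr : ∑ g, Complex.normSq (z g) = 0 := by exact_mod_cast he
    intro g
    have := (Finset.sum_eq_zero_iff_of_nonneg (fun g _ => Complex.normSq_nonneg _)).1 hr g
      (Finset.mem_univ g)
    exact Complex.normSq_eq_zero.1 this
  have hfix : Pr *ᵥ u j = u j := by
    funext f
    have h0 : u j f - (Pr *ᵥ u j) f = 0 := by simpa [hzdef] using hz0 f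
    exact (sub_eq_zero.1 h0).symm
  intro σ f
  calc u j (f ∘ σ) = (permOp N d σ *ᵥ u j) f := (permOp_mulVec N d σ (u j) f).symm
    _ = (permOp N d σ *ᵥ (Pr *ᵥ u j)) f := by rw [hfix]
    _ = ((permOp N d σ * Pr) *ᵥ u j) f := by rw [Matrix.mulVec_mulVec]
    _ = (Pr *ᵥ u j) f := by rw [hPr, permOp_mul_symProj]
    _ = u j f := by rw [hfix]

open scoped symmDiff

lemma rankOneDecomp {n : Type*} [Fintype n] [DecidableEq n] (M : Matrix n n ℂ)
    (h : M.PosSemidef) :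
    ∃ (q : n → ℝ) (v : n → n → ℂ), (∀ k, 0 ≤ q k) ∧
      ∀ i j, M i j = ∑ k, (q k : ℂ) * (v k i * (starRingEnd ℂ) (v k j)) := by
  refine ⟨h.1.eigenvalues, fun k i => (h.1.eigenvectorUnitary : Matrix n n ℂ) i k,
    h.eigenvalues_nonneg, fun i j => ?_⟩
  conv_lhs => rw [h.1.spectral_theorem, Unitary.conjStarAlgAut_apply]
  rw [Matrix.mul_apply]
  simp only [Matrix.mul_apply, Matrix.diagonal_apply, Function.comp,
    mul_ite, mul_zero, Finset.sum_ite_eq', Finset.mem_univ, if_true]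
  refine Finset.sum_congr rfl fun k _ => ?_
  simp only [Matrix.star_apply, RCLike.star_def]
  rw [show ((h.1.eigenvalues k : ℝ) : ℂ) = (RCLike.ofReal (h.1.eigenvalues k) : ℂ) from rfl]
  ring

variable {N d : ℕ}

/-- exchange property across a subset `A` of sites -/
def ExP (u : (Fin N → Fin d) → ℂ) (A : Finset (Fin N)) : Prop :=
  ∀ f g, u f * u g = u (fun i => if i ∈ A then g i else f i) *
    u (fun i => if i ∈ A then f i else g i)

lemma ExP.symmDiff {u : (Fin N → Fin d) → ℂ} {A B : Finset (Fin N)}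
    (hA : ExP u A) (hB : ExP u B) : ExP u (A ∆ B) := by
  intro f g
  rw [hA f g, hB (fun i => if i ∈ A then g i else f i) (fun i => if i ∈ A then f i else g i)]
  congr 1
  · congr 1
    funext i
    by_cases h1 : i ∈ A <;> by_cases h2 : i ∈ B <;>
      simp [Finset.mem_symmDiff, h1, h2]
  · congr 1
    funext i
    by_cases h1 : i ∈ A <;> by_cases h2 : i ∈ B <;>
      simp [Finset.mem_symmDiff, h1, h2]

lemma ExP.image {u : (Fin N → Fin d) → ℂ} {A : Finset (Fin N)}
    (hsym : ∀ (σ : Equiv.Perm (Fin N)) f, u (f ∘ σ) = u f)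
    (hA : ExP u A) (σ : Equiv.Perm (Fin N)) : ExP u (A.image σ) := by
  intro f g
  have h := hA (f ∘ σ) (g ∘ σ)
  rw [hsym σ f, hsym σ g] at h
  rw [h]
  have key : ∀ (p q : Fin N → Fin d),
      (fun i => if i ∈ A then (p ∘ σ) i else (q ∘ σ) i)
        = (fun i => if i ∈ A.image σ then p i else q i) ∘ σ := by
    intro p q
    funext i
    simp only [Function.comp_apply]
    have : σ i ∈ A.image σ ↔ i ∈ A := by
      simp [Finset.mem_image, σ.injective.eq_iff]
    by_cases hi : i ∈ A
    · rw [if_pos hi, if_pos (this.2 hi)]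
    · rw [if_neg hi, if_neg (fun hc => hi (this.1 hc))]
  rw [key g f, key f g, hsym σ, hsym σ]

lemma exists_perm_pair {α : Type*} [DecidableEq α] {a b c e : α} (hab : a ≠ b) (hce : c ≠ e) :
    ∃ σ : Equiv.Perm α, σ a = c ∧ σ b = e := by
  refine ⟨(Equiv.swap a c).trans (Equiv.swap ((Equiv.swap a c) b) e), ?_, ?_⟩
  · simp only [Equiv.trans_apply, Equiv.swap_apply_left]
    apply Equiv.swap_apply_of_ne_of_ne
    · intro h
      apply hab
      have := congrArg (Equiv.swap a c) h
      rwa [Equiv.swap_apply_right, Equiv.swap_apply_self] at this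
    · exact hce
  · simp only [Equiv.trans_apply]
    exact Equiv.swap_apply_left _ _

lemma symmDiff_image_swap {S : Finset (Fin N)} {i0 j0 : Fin N}
    (hi0 : i0 ∈ S) (hj0 : j0 ∉ S) :
    S ∆ (S.image (Equiv.swap i0 j0)) = {i0, j0} := by
  have hij : i0 ≠ j0 := fun h => hj0 (h ▸ hi0)
  have himg : ∀ k, (k ∈ S.image (Equiv.swap i0 j0) ↔ Equiv.swap i0 j0 k ∈ S) := by
    intro k
    rw [Finset.mem_image]
    constructor
    · rintro ⟨a, ha, rfl⟩
      rwa [Equiv.swap_apply_self]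
    · intro h
      exact ⟨_, h, Equiv.swap_apply_self _ _ _⟩
  ext k
  rw [Finset.mem_symmDiff, himg, Finset.mem_insert, Finset.mem_singleton]
  by_cases h1 : k = i0
  · subst h1
    simp [Equiv.swap_apply_left, hi0, hj0]
  · by_cases h2 : k = j0
    · subst h2
      simp [Equiv.swap_apply_right, hi0, hj0]
    · rw [Equiv.swap_apply_of_ne_of_ne h1 h2]
      simp [h1, h2]

lemma exP_pair {u : (Fin N → Fin d) → ℂ} {S : Finset (Fin N)} {i0 j0 : Fin N}
    (hsym : ∀ (σ : Equiv.Perm (Fin N)) f, u (f ∘ σ) = u f)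
    (hExS : ExP u S) (hi0 : i0 ∈ S) (hj0 : j0 ∉ S)
    {i j : Fin N} (hij : i ≠ j) : ExP u {i, j} := by
  have hij0 : i0 ≠ j0 := fun h => hj0 (h ▸ hi0)
  have h1 : ExP u ({i0, j0} : Finset (Fin N)) := by
    rw [← symmDiff_image_swap hi0 hj0]
    exact hExS.symmDiff (hExS.image hsym _)
  obtain ⟨σ, hσ1, hσ2⟩ := exists_perm_pair hij0 hij
  have h2 := h1.image hsym σ
  rwa [Finset.image_insert, Finset.image_singleton, hσ1, hσ2] at h2

lemma exP_single {u : (Fin N → Fin d) → ℂ}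
    (hpair : ∀ i j : Fin N, i ≠ j → ExP u {i, j})
    {k l : Fin N} (hkl : k ≠ l) (f g : Fin N → Fin d) (hagree : f l = g l) :
    u f * u g = u (Function.update f k (g k)) * u (Function.update g k (f k)) := by
  rw [hpair k l hkl f g]
  congr 1
  · congr 1
    funext i
    by_cases h1 : i = k
    · subst h1; simp [Function.update]
    · by_cases h2 : i = l
      · subst h2
        simp [Function.update, h1, hagree, Ne.symm hkl]
      · simp [Function.update, h1, h2, Finset.mem_insert, Finset.mem_singleton]
  · congr 1
    funext i
    by_cases h1 : i = k
    · subst h1; simp [Function.update]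
    · by_cases h2 : i = l
      · subst h2
        simp [Function.update, h1, hagree, Ne.symm hkl]
      · simp [Function.update, h1, h2, Finset.mem_insert, Finset.mem_singleton]

lemma factor_from_formula (hN : 1 ≤ N) (u : (Fin N → Fin d) → ℂ)
    (hsym : ∀ (σ : Equiv.Perm (Fin N)) f, u (f ∘ σ) = u f)
    (f0 : Fin N → Fin d) (hf0 : u f0 ≠ 0)
    (hF : ∀ f, u f * (u f0) ^ (N - 1) = ∏ k, u (Function.update f0 k (f k))) :
    ∃ (c : ℂ) (a : Fin d → ℂ), ∀ f, u f = c * ∏ i, a (f i) := by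
  classical
  set a1 : Fin N → Fin d → ℂ := fun k t => u (Function.update f0 k t) with ha1
  have ha1self : ∀ k, a1 k (f0 k) = u f0 := by
    intro k; rw [ha1]; simp [Function.update_eq_self]
  have step9 : ∀ j k : Fin N, j ≠ k → ∀ s t : Fin d,
      a1 j t * a1 k s = a1 j s * a1 k t := by
    intro j k hjk s t
    set f : Fin N → Fin d := Function.update (Function.update f0 j s) k t with hf
    have hfj : f j = s := by rw [hf]; simp [Function.update, hjk]
    have hfk : f k = t := by rw [hf]; simp [Function.update]
    have hfo : ∀ i, i ≠ j → i ≠ k → f i = f0 i := by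
      intro i hij hik; rw [hf]; simp [Function.update, hij, hik]
    have h1 := hF f
    have h2 := hF (f ∘ Equiv.swap j k)
    rw [hsym] at h2
    have heq : (∏ k', a1 k' ((f ∘ Equiv.swap j k) k')) = ∏ k', a1 k' (f k') := by
      rw [← h1, ← h2]
    have hkmem : k ∈ (Finset.univ : Finset (Fin N)).erase j := by
      simp [Finset.mem_erase]
      exact Ne.symm hjk
    have split : ∀ v : Fin N → Fin d,
        (∏ k', a1 k' (v k')) = a1 j (v j) *
          (a1 k (v k) * ∏ k' ∈ ((Finset.univ : Finset (Fin N)).erase j).erase k,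
            a1 k' (v k')) := by
      intro v
      rw [← Finset.mul_prod_erase _ (fun k' => a1 k' (v k')) (Finset.mem_univ j),
        ← Finset.mul_prod_erase _ (fun k' => a1 k' (v k')) hkmem]
    rw [split, split] at heq
    have hswapj : (f ∘ Equiv.swap j k) j = t := by
      simp only [Function.comp_apply, Equiv.swap_apply_left]
      exact hfk
    have hswapk : (f ∘ Equiv.swap j k) k = s := by
      simp only [Function.comp_apply, Equiv.swap_apply_right]
      exact hfj
    have htail : ∀ k' ∈ ((Finset.univ : Finset (Fin N)).erase j).erase k,
        a1 k' ((f ∘ Equiv.swap j k) k') = a1 k' (f k') := by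
      intro k' hk'
      simp only [Finset.mem_erase] at hk'
      simp [Equiv.swap_apply_of_ne_of_ne hk'.2.1 hk'.1]
    rw [hswapj, hswapk, Finset.prod_congr rfl htail, hfj, hfk] at heq
    have htail0 : (∏ k' ∈ ((Finset.univ : Finset (Fin N)).erase j).erase k, a1 k' (f k'))
        = ∏ _k' ∈ ((Finset.univ : Finset (Fin N)).erase j).erase k, u f0 := by
      apply Finset.prod_congr rfl
      intro k' hk'
      simp only [Finset.mem_erase] at hk'
      rw [hfo k' hk'.2.1 hk'.1]
      exact ha1self k'
    rw [htail0] at heq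
    have hP : (∏ _k' ∈ ((Finset.univ : Finset (Fin N)).erase j).erase k, u f0) ≠ 0 :=
      Finset.prod_ne_zero_iff.2 (fun _ _ => hf0)
    have heq2 : (a1 j t * a1 k s) * (∏ _k' ∈ ((Finset.univ : Finset (Fin N)).erase j).erase k, u f0)
        = (a1 j s * a1 k t) * (∏ _k' ∈ ((Finset.univ : Finset (Fin N)).erase j).erase k, u f0) := by
      rw [mul_assoc, mul_assoc]
      exact heq
    exact mul_right_cancel₀ hP heq2
  have hp0 : (0 : ℕ) < N := hN
  set p0 : Fin N := ⟨0, hp0⟩ with hp0def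
  set a : Fin d → ℂ := a1 p0 with ha
  set γ : Fin N → ℂ := fun k => a1 p0 (f0 k) with hγ
  have hrel : ∀ k t, γ k * a1 k t = a t * u f0 := by
    intro k t
    by_cases hk : k = p0
    · subst hk
      have e1 : γ p0 = u f0 := by simp only [hγ]; exact ha1self p0
      rw [e1]
      simp only [ha]
      ring
    · have h := step9 p0 k (fun h => hk h.symm) (f0 k) t
      rw [ha1self] at h
      simp only [hγ, ha]
      exact h.symm
  have hγ0 : ∀ k, γ k ≠ 0 := by
    intro k hzero
    have h := hrel k (f0 p0)
    rw [hzero, zero_mul] at h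
    have e1 : a (f0 p0) = u f0 := by simp only [ha]; exact ha1self p0
    rw [e1] at h
    exact (mul_ne_zero hf0 hf0) h.symm
  have hG : (∏ k, γ k) ≠ 0 := Finset.prod_ne_zero_iff.2 (fun k _ => hγ0 k)
  refine ⟨u f0 / (∏ k, γ k), a, fun f => ?_⟩
  have h2 : ∏ k, (γ k * a1 k (f k)) = (∏ k, a (f k)) * (u f0) ^ N := by
    rw [Finset.prod_congr rfl (fun k _ => hrel k (f k)), Finset.prod_mul_distrib,
      Finset.prod_const, Finset.card_univ, Fintype.card_fin]
  rw [Finset.prod_mul_distrib] at h2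
  have hpow : (u f0) ^ N = (u f0) ^ (N - 1) * u f0 := by
    conv_lhs => rw [show N = (N - 1) + 1 from (Nat.succ_pred_eq_of_pos hN).symm]
    rw [pow_succ]
  rw [← hF f, hpow] at h2
  have hX : (u f0) ^ (N - 1) ≠ 0 := pow_ne_zero _ hf0
  have h3 : ((∏ k, γ k) * u f) * (u f0) ^ (N - 1)
      = ((∏ k, a (f k)) * u f0) * (u f0) ^ (N - 1) := by
    linear_combination h2
  have h4 := mul_right_cancel₀ hX h3
  rw [div_mul_eq_mul_div, eq_div_iff hG]
  linear_combination h4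

lemma key_product_symmetric {S : Finset (Fin N)} {i0 j0 : Fin N} (hi0 : i0 ∈ S) (hj0 : j0 ∉ S)
    (u : (Fin N → Fin d) → ℂ)
    (hsym : ∀ (σ : Equiv.Perm (Fin N)) f, u (f ∘ σ) = u f)
    (hExS : ExP u S)
    (f0 : Fin N → Fin d) (hf0 : u f0 ≠ 0) :
    ∃ (c : ℂ) (a : Fin d → ℂ), ∀ f, u f = c * ∏ i, a (f i) := by
  classical
  have hij : i0 ≠ j0 := fun h => hj0 (h ▸ hi0)
  have hvij : i0.val ≠ j0.val := fun h => hij (Fin.ext h)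
  have hN2 : 2 ≤ N := by
    have := i0.isLt; have := j0.isLt; omega
  have hpair : ∀ i j : Fin N, i ≠ j → ExP u {i, j} :=
    fun i j h => exP_pair hsym hExS hi0 hj0 h
  apply factor_from_formula (by omega) u hsym f0 hf0
  intro f
  rcases Nat.lt_or_ge N 3 with hN3 | hN3
  · -- N = 2
    have hNeq : N = 2 := by omega
    subst hNeq
    have huniv2 : ∀ i : Fin 2, i = i0 ∨ i = j0 := by
      intro i
      have h1 := i.isLt; have h2 := i0.isLt; have h3 := j0.isLt
      have : i.val = i0.val ∨ i.val = j0.val := by omega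
      rcases this with h | h
      · exact Or.inl (Fin.ext h)
      · exact Or.inr (Fin.ext h)
    have hSeq : S = {i0} := by
      ext k
      simp only [Finset.mem_singleton]
      constructor
      · intro hk
        rcases huniv2 k with rfl | rfl
        · rfl
        · exact absurd hk hj0
      · rintro rfl; exact hi0
    rw [hSeq] at hExS
    have h := hExS f f0
    have e1 : (fun i => if i ∈ ({i0} : Finset (Fin 2)) then f0 i else f i)
        = Function.update f0 j0 (f j0) := by
      funext i
      rcases huniv2 i with rfl | rfl
      · simp [Function.update, hij]
      · simp [Function.update, Ne.symm hij, hij]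
    have e2 : (fun i => if i ∈ ({i0} : Finset (Fin 2)) then f i else f0 i)
        = Function.update f0 i0 (f i0) := by
      funext i
      rcases huniv2 i with rfl | rfl
      · simp [Function.update]
      · simp [Function.update, Ne.symm hij, hij]
    rw [e1, e2] at h
    have huniv : (Finset.univ : Finset (Fin 2)) = {i0, j0} := by
      ext i
      simp only [Finset.mem_univ, true_iff, Finset.mem_insert, Finset.mem_singleton]
      exact huniv2 i
    rw [huniv, Finset.prod_insert (by simp [hij]), Finset.prod_singleton]
    rw [show (2 - 1 : ℕ) = 1 from rfl, pow_one, h]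
    ring
  · -- N ≥ 3 : telescope
    set A' : ℕ → ℂ := fun k =>
      if h : k < N then u (Function.update f0 ⟨k, h⟩ (f ⟨k, h⟩)) else 1 with hA'
    set hfun : ℕ → (Fin N → Fin d) := fun m i => if (i : ℕ) < m then f0 i else f i with hhfun
    have z0lt : (0 : ℕ) < N := by omega
    have z1lt : (1 : ℕ) < N := by omega
    have z2lt : (2 : ℕ) < N := by omega
    set z0 : Fin N := ⟨0, z0lt⟩
    set z1 : Fin N := ⟨1, z1lt⟩
    set z2 : Fin N := ⟨2, z2lt⟩
    have key2 : ∀ m, 2 ≤ m → m ≤ N →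
        u f * (u f0) ^ m = u (hfun m) * ∏ k ∈ Finset.range m, A' k := by
      intro m hm2
      induction m, hm2 using Nat.le_induction with
      | base =>
        intro _
        have h01 : z0 ≠ z1 := by simp [Fin.ext_iff]
        have h := hpair z0 z1 h01 f f0
        have e1 : (fun i => if i ∈ ({z0, z1} : Finset (Fin N)) then f0 i else f i)
            = hfun 2 := by
          funext i
          have : i ∈ ({z0, z1} : Finset (Fin N)) ↔ (i : ℕ) < 2 := by
            simp [Finset.mem_insert, Finset.mem_singleton, Fin.ext_iff, z0, z1]
            omega
          by_cases hi : (i : ℕ) < 2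
          · rw [if_pos (this.2 hi), hhfun]; simp [hi]
          · rw [if_neg (fun hc => hi (this.1 hc)), hhfun]; simp [hi]
        set X2 : Fin N → Fin d :=
          fun i => if i ∈ ({z0, z1} : Finset (Fin N)) then f i else f0 i with hX2
        have hagree : X2 z2 = f0 z2 := by
          rw [hX2]
          simp [Fin.ext_iff, z0, z1, z2]
        have h02 : z0 ≠ z2 := by simp [Fin.ext_iff]
        have hsingle := exP_single hpair h02 X2 f0 (by rw [hagree])
        have e3 : Function.update X2 z0 (f0 z0) = Function.update f0 z1 (f z1) := by
          funext i
          by_cases hi0' : i = z0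
          · subst hi0'
            simp [Function.update, Fin.ext_iff]
          · by_cases hi1 : i = z1
            · subst hi1
              simp [Function.update, Fin.ext_iff, hX2]
            · have : i ∉ ({z0, z1} : Finset (Fin N)) := by
                simp [Finset.mem_insert, Finset.mem_singleton, hi0', hi1]
              simp [Function.update, hi0', hi1, hX2, this]
        have e4 : X2 z0 = f z0 := by rw [hX2]; simp
        rw [e3, e4] at hsingle
        have hA0 : A' 0 = u (Function.update f0 z0 (f z0)) := by rw [hA']; exact dif_pos z0lt
        have hA1 : A' 1 = u (Function.update f0 z1 (f z1)) := by rw [hA']; exact dif_pos z1lt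
        rw [Finset.prod_range_succ, Finset.prod_range_one, hA0, hA1]
        calc u f * u f0 ^ 2 = (u f * u f0) * u f0 := by ring
          _ = (u (hfun 2) * u X2) * u f0 := by rw [h, e1]
          _ = u (hfun 2) * (u X2 * u f0) := by ring
          _ = u (hfun 2) * (u (Function.update f0 z1 (f z1)) * u (Function.update f0 z0 (f z0))) := by
              rw [hsingle]
          _ = u (hfun 2) * (u (Function.update f0 z0 (f z0)) * u (Function.update f0 z1 (f z1))) := by
              ring
      | succ m hm ih =>
        intro hmN
        have ihm := ih (by omega)
        have hmlt : m < N := by omega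
        set zm : Fin N := ⟨m, hmlt⟩ with hzm
        have hm0 : zm ≠ z0 := by simp [Fin.ext_iff, zm, z0]; omega
        have hagree : hfun m z0 = f0 z0 := by rw [hhfun]; simp [z0]; omega
        have hsingle := exP_single hpair hm0 (hfun m) f0 (by rw [hagree])
        have e5 : Function.update (hfun m) zm (f0 zm) = hfun (m + 1) := by
          funext i
          by_cases hi : i = zm
          · subst hi
            simp [Function.update, hhfun, zm]
          · have hvi : (i : ℕ) ≠ m := fun h => hi (Fin.ext h)
            have : (i : ℕ) < m + 1 ↔ (i : ℕ) < m := by omega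
            simp [Function.update, hi, hhfun, this]
        have e6 : hfun m zm = f zm := by rw [hhfun]; simp [zm]
        rw [e5, e6] at hsingle
        have hAm : A' m = u (Function.update f0 zm (f zm)) := by rw [hA']; simp [hmlt, zm]
        rw [Finset.prod_range_succ, hAm]
        calc u f * u f0 ^ (m + 1) = (u f * u f0 ^ m) * u f0 := by ring
          _ = (u (hfun m) * ∏ k ∈ Finset.range m, A' k) * u f0 := by rw [ihm]
          _ = (u (hfun m) * u f0) * ∏ k ∈ Finset.range m, A' k := by ring
          _ = (u (hfun (m + 1)) * u (Function.update f0 zm (f zm)))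
              * ∏ k ∈ Finset.range m, A' k := by rw [hsingle]
          _ = u (hfun (m + 1)) * ((∏ k ∈ Finset.range m, A' k)
              * u (Function.update f0 zm (f zm))) := by ring
    have hend := key2 N hN2 (le_refl N)
    have e7 : hfun N = f0 := by
      funext i
      rw [hhfun]
      simp [i.isLt]
    have e8 : (∏ k ∈ Finset.range N, A' k) = ∏ k : Fin N, u (Function.update f0 k (f k)) := by
      rw [← Fin.prod_univ_eq_prod_range A' N]
      apply Finset.prod_congr rfl
      intro i _
      rw [hA']
      simp [i.isLt]
    rw [e7, e8] at hend
    have hpow : (u f0) ^ N = (u f0) ^ (N - 1) * u f0 := by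
      conv_lhs => rw [show N = (N - 1) + 1 by omega]
      rw [pow_succ]
    rw [hpow] at hend
    have : (u f * u f0 ^ (N - 1)) * u f0
        = (∏ k : Fin N, u (Function.update f0 k (f k))) * u f0 := by
      linear_combination hend
    exact mul_right_cancel₀ hf0 this

/-- A permutationally symmetric density matrix supported on the symmetric subspace
of `(ℂ^d)^⊗N` that is separable across one nontrivial bipartition `S | Sᶜ` is
fully separable, i.e., a convex combination of pure product states `|a⟩⟨a|^⊗N`. -/
theorem symmetric_separable_is_fully_separable (N d : ℕ)
    (ρ : Matrix (Fin N → Fin d) (Fin N → Fin d) ℂ)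
    (hρ : ρ.PosSemidef) (htr : ρ.trace = 1)
    (hperm : ∀ σ : Equiv.Perm (Fin N), ∀ f g, ρ (f ∘ σ) (g ∘ σ) = ρ f g)
    (hsupp : symProj N d * ρ * symProj N d = ρ)
    (S : Finset (Fin N)) (hS : S.Nonempty) (hSc : Sᶜ.Nonempty)
    (hsep : ∃ (K : ℕ) (w : Fin K → ℝ)
        (σs : Fin K → Matrix ({i // i ∈ S} → Fin d) ({i // i ∈ S} → Fin d) ℂ)
        (τs : Fin K → Matrix ({i // i ∉ S} → Fin d) ({i // i ∉ S} → Fin d) ℂ),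
        (∀ k, 0 ≤ w k) ∧ ∑ k, w k = 1 ∧
        (∀ k, (σs k).PosSemidef ∧ (σs k).trace = 1) ∧
        (∀ k, (τs k).PosSemidef ∧ (τs k).trace = 1) ∧
        ∀ f g, ρ f g = ∑ k, (w k : ℂ) *
          σs k (fun i => f i.1) (fun i => g i.1) *
          τs k (fun i => f i.1) (fun i => g i.1)) :
    ∃ (K : ℕ) (w : Fin K → ℝ) (a : Fin K → (Fin d → ℂ)),
      (∀ k, 0 ≤ w k) ∧ ∑ k, w k = 1 ∧
      (∀ k, star (a k) ⬝ᵥ a k = 1) ∧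
      ∀ f g, ρ f g = ∑ k, (w k : ℂ) *
        ((∏ i, a k (f i)) * (∏ i, (starRingEnd ℂ) (a k (g i)))) := by

  classical
  obtain ⟨i0, hi0⟩ := hS
  obtain ⟨j0, hj0'⟩ := hSc
  have hj0 : j0 ∉ S := Finset.mem_compl.1 hj0'
  -- d ≥ 1
  rcases Nat.eq_zero_or_pos d with rfl | hd
  · exfalso
    haveI : IsEmpty (Fin N → Fin 0) := ⟨fun f => (f i0).elim0⟩
    rw [Matrix.trace] at htr
    simp only [Finset.univ_eq_empty, Finset.sum_empty] at htr
    exact one_ne_zero htr.symm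
  obtain ⟨K0, w, σs, τs, hw0, hw1, hσ, hτ, hρeq⟩ := hsep
  choose qσ vσ hqσ hσdec using fun k => rankOneDecomp _ (hσ k).1
  choose qτ vτ hqτ hτdec using fun k => rankOneDecomp _ (hτ k).1
  set J := Fin K0 × (({i // i ∈ S} → Fin d) × ({i // i ∉ S} → Fin d)) with hJ
  set q : J → ℝ := fun j => w j.1 * (qσ j.1 j.2.1 * qτ j.1 j.2.2) with hq
  set u : J → (Fin N → Fin d) → ℂ := fun j f =>
    vσ j.1 j.2.1 (fun i => f i.1) * vτ j.1 j.2.2 (fun i => f i.1) with hu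
  have hqnn : ∀ j, 0 ≤ q j := fun j =>
    mul_nonneg (hw0 _) (mul_nonneg (hqσ _ _) (hqτ _ _))
  have hdec : ∀ f g, ρ f g = ∑ j, (q j : ℂ) * (u j f * (starRingEnd ℂ) (u j g)) := by
    intro f g
    rw [hρeq f g]
    rw [Fintype.sum_prod_type]
    apply Finset.sum_congr rfl
    intro k _
    rw [hσdec k (fun i => f i.1) (fun i => g i.1), hτdec k (fun i => f i.1) (fun i => g i.1)]
    rw [Finset.mul_sum]
    conv_rhs => rw [Fintype.sum_prod_type]
    conv_rhs => rw [Finset.sum_comm]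
    apply Finset.sum_congr rfl
    intro n _
    rw [Finset.mul_sum, Finset.sum_mul]
    apply Finset.sum_congr rfl
    intro m _
    simp only [hq, hu]
    push_cast
    rw [_root_.map_mul]
    ring
  have husym : ∀ j, q j ≠ 0 → ∀ (σ : Equiv.Perm (Fin N)) f, u j (f ∘ σ) = u j f :=
    fun j hj => symmetric_of_support hsupp q u hqnn hdec j hj
  have hExS : ∀ j, ExP (u j) S := by
    intro j f g
    have eS : ∀ p p' : Fin N → Fin d,
        (fun i : {i // i ∈ S} => (fun i' => if i' ∈ S then p i' else p' i') i.1)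
          = fun i : {i // i ∈ S} => p i.1 := by
      intro p p'; funext i; exact if_pos i.2
    have eSc : ∀ p p' : Fin N → Fin d,
        (fun i : {i // i ∉ S} => (fun i' => if i' ∈ S then p i' else p' i') i.1)
          = fun i : {i // i ∉ S} => p' i.1 := by
      intro p p'; funext i; exact if_neg i.2
    simp only [hu, eS, eSc]
    ring
  -- choose factorizations for good components
  have H : ∀ j, ∃ (c : ℂ) (a : Fin d → ℂ),
      (q j ≠ 0 ∧ u j ≠ 0) → ∀ f, u j f = c * ∏ i, a (f i) := by
    intro j
    by_cases hgood : q j ≠ 0 ∧ u j ≠ 0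
    · obtain ⟨f0, hf0⟩ := Function.ne_iff.1 hgood.2
      obtain ⟨c, a, hca⟩ := key_product_symmetric hi0 hj0 (u j)
        (husym j hgood.1) (hExS j) f0 (by simpa using hf0)
      exact ⟨c, a, fun _ => hca⟩
    · exact ⟨0, 0, fun h => absurd h hgood⟩
  choose cc aa hca using H
  set Gd : J → Prop := fun j => q j ≠ 0 ∧ u j ≠ 0 with hGd
  set nrm : J → ℝ := fun j => ∑ t, Complex.normSq (aa j t) with hnrm
  set sc : J → ℂ := fun j => ((Real.sqrt (nrm j) : ℝ) : ℂ)⁻¹ with hsc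
  set e0 : Fin d → ℂ := fun t => if t = (⟨0, hd⟩ : Fin d) then 1 else 0 with he0
  set va : J → Fin d → ℂ := fun j => if Gd j then (fun t => sc j * aa j t) else e0 with hva
  set Wt : J → ℝ := fun j => if Gd j then q j * Complex.normSq (cc j) * (nrm j) ^ N else 0
    with hWt
  have hnrm_pos : ∀ j, Gd j → 0 < nrm j := by
    intro j hj
    obtain ⟨f0, hf0⟩ := Function.ne_iff.1 hj.2
    have hf0' : u j f0 ≠ 0 := by simpa using hf0
    have h1 : cc j * ∏ i, aa j (f0 i) ≠ 0 := by
      rw [← hca j hj f0]; exact hf0'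
    have h2 : (∏ i, aa j (f0 i)) ≠ 0 := (mul_ne_zero_iff.1 h1).2
    have h3 : aa j (f0 i0) ≠ 0 := Finset.prod_ne_zero_iff.1 h2 i0 (Finset.mem_univ i0)
    rw [hnrm]
    exact Finset.sum_pos' (fun t _ => Complex.normSq_nonneg _)
      ⟨f0 i0, Finset.mem_univ _, Complex.normSq_pos.2 h3⟩
  have hscsc : ∀ j, Gd j → sc j * sc j = ((nrm j : ℝ) : ℂ)⁻¹ := by
    intro j hj
    rw [hsc]
    simp only
    rw [← mul_inv]
    congr 1
    rw [← Complex.ofReal_mul, Real.mul_self_sqrt (hnrm_pos j hj).le]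
  have hconj_sc : ∀ j, (starRingEnd ℂ) (sc j) = sc j := by
    intro j
    rw [hsc]
    simp only
    rw [map_inv₀, Complex.conj_ofReal]
  have hWt_nn : ∀ j, 0 ≤ Wt j := by
    intro j
    rw [hWt]
    simp only
    by_cases h : Gd j
    · rw [if_pos h]
      exact mul_nonneg (mul_nonneg (hqnn j) (Complex.normSq_nonneg _))
        (pow_nonneg (hnrm_pos j h).le N)
    · rw [if_neg h]
  have hva_norm : ∀ j, star (va j) ⬝ᵥ va j = 1 := by
    intro j
    by_cases hj : Gd j
    · have hnz : ((nrm j : ℝ) : ℂ) ≠ 0 := by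
        exact_mod_cast (hnrm_pos j hj).ne'
      rw [hva]
      simp only [if_pos hj]
      have : ∀ t, star (sc j * aa j t) * (sc j * aa j t)
          = (sc j * sc j) * ((Complex.normSq (aa j t) : ℝ) : ℂ) := by
        intro t
        rw [Complex.normSq_eq_conj_mul_self]
        simp only [Complex.star_def, _root_.map_mul, hconj_sc j]
        ring
      calc (star (fun t => sc j * aa j t) ⬝ᵥ fun t => sc j * aa j t)
          = ∑ t, star (sc j * aa j t) * (sc j * aa j t) := rfl
        _ = ∑ t, (sc j * sc j) * ((Complex.normSq (aa j t) : ℝ) : ℂ) := by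
            exact Finset.sum_congr rfl (fun t _ => this t)
        _ = (sc j * sc j) * ∑ t, ((Complex.normSq (aa j t) : ℝ) : ℂ) := by
            rw [Finset.mul_sum]
        _ = ((nrm j : ℝ) : ℂ)⁻¹ * ((nrm j : ℝ) : ℂ) := by
            rw [hscsc j hj, ← Complex.ofReal_sum]
        _ = 1 := inv_mul_cancel₀ hnz
    · rw [hva]
      simp only [if_neg hj, he0]
      rw [dotProduct]
      rw [Finset.sum_eq_single (⟨0, hd⟩ : Fin d)]
      · simp
      · intro t _ ht
        simp [ht]
      · simp
  have hfinal : ∀ f g, ρ f g = ∑ j, ((Wt j : ℝ) : ℂ) *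
      ((∏ i, va j (f i)) * (∏ i, (starRingEnd ℂ) (va j (g i)))) := by
    intro f g
    rw [hdec f g]
    apply Finset.sum_congr rfl
    intro j _
    by_cases hj : Gd j
    · have hnz : ((nrm j : ℝ) : ℂ) ≠ 0 := by exact_mod_cast (hnrm_pos j hj).ne'
      have hone : ((nrm j : ℝ) : ℂ) ^ N * (sc j ^ N * sc j ^ N) = 1 := by
        rw [← mul_pow, ← mul_pow, hscsc j hj, mul_inv_cancel₀ hnz, one_pow]
      have hprodf : (∏ i, va j (f i)) = sc j ^ N * ∏ i, aa j (f i) := by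
        rw [hva]
        simp only [if_pos hj]
        rw [Finset.prod_mul_distrib, Finset.prod_const, Finset.card_univ, Fintype.card_fin]
      have hprodg : (∏ i, (starRingEnd ℂ) (va j (g i)))
          = sc j ^ N * ∏ i, (starRingEnd ℂ) (aa j (g i)) := by
        rw [hva]
        simp only [if_pos hj, _root_.map_mul, hconj_sc j]
        rw [Finset.prod_mul_distrib, Finset.prod_const, Finset.card_univ, Fintype.card_fin]
      have hWtj : ((Wt j : ℝ) : ℂ)
          = ((q j : ℝ) : ℂ) * ((starRingEnd ℂ) (cc j) * cc j) * ((nrm j : ℝ) : ℂ) ^ N := by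
        rw [hWt]
        simp only [if_pos hj]
        push_cast
        rw [← Complex.normSq_eq_conj_mul_self]
      have hug : (starRingEnd ℂ) (u j g)
          = (starRingEnd ℂ) (cc j) * ∏ i, (starRingEnd ℂ) (aa j (g i)) := by
        rw [hca j hj g, _root_.map_mul, map_prod]
      rw [hca j hj f, hug, hprodf, hprodg, hWtj]
      linear_combination (-(((q j : ℝ) : ℂ) * ((starRingEnd ℂ) (cc j) * cc j) *
        (∏ i, aa j (f i)) * (∏ i, (starRingEnd ℂ) (aa j (g i))))) * hone
    · have hWtj : ((Wt j : ℝ) : ℂ) = 0 := by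
        rw [hWt]; simp [if_neg hj]
      rw [hWtj, zero_mul]
      rcases not_and_or.1 hj with h | h
      · have : q j = 0 := not_not.1 h
        rw [this]
        push_cast
        ring
      · have : u j = 0 := not_not.1 h
        rw [this]
        simp
  have hsum_pow : ∀ (h : Fin d → ℂ),
      (∑ f : Fin N → Fin d, ∏ i, h (f i)) = (∑ t, h t) ^ N := by
    intro h
    have h1 := Finset.prod_univ_sum (fun _ : Fin N => (Finset.univ : Finset (Fin d)))
      (fun _ t => h t)
    rw [Finset.prod_const, Finset.card_univ, Fintype.card_fin, Fintype.piFinset_univ] at h1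
    exact h1.symm
  have htotal : ∑ j, Wt j = 1 := by
    have htr' : ∑ f, ρ f f = 1 := by
      rw [← htr, Matrix.trace]
      rfl
    have h2 : ∑ f, ρ f f = ∑ j, ((Wt j : ℝ) : ℂ) := by
      rw [Finset.sum_congr rfl (fun f _ => hfinal f f), Finset.sum_comm]
      apply Finset.sum_congr rfl
      intro j _
      have h3 : ∀ f : Fin N → Fin d, (∏ i, va j (f i)) * (∏ i, (starRingEnd ℂ) (va j (f i)))
          = ∏ i, (va j (f i) * (starRingEnd ℂ) (va j (f i))) := by
        intro f
        rw [Finset.prod_mul_distrib]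
      have h4 : (∑ t, va j t * (starRingEnd ℂ) (va j t)) = 1 := by
        have := hva_norm j
        rw [dotProduct] at this
        rw [← this]
        exact Finset.sum_congr rfl (fun t _ => by rw [Pi.star_apply, Complex.star_def]; ring)
      rw [← Finset.mul_sum]
      rw [Finset.sum_congr rfl (fun f _ => h3 f),
        hsum_pow (fun t => va j t * (starRingEnd ℂ) (va j t)), h4, one_pow, mul_one]
    rw [htr'] at h2
    have : ((∑ j, Wt j : ℝ) : ℂ) = 1 := by
      push_cast
      exact h2.symm
    exact_mod_cast this
  refine ⟨Fintype.card J, fun k => Wt ((Fintype.equivFin J).symm k),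
    fun k => va ((Fintype.equivFin J).symm k), fun k => hWt_nn _, ?_, fun k => hva_norm _, ?_⟩
  · rw [Equiv.sum_comp (Fintype.equivFin J).symm Wt]
    exact htotal
  · intro f g
    rw [hfinal f g]
    exact (Equiv.sum_comp (Fintype.equivFin J).symm
      (fun j => ((Wt j : ℝ) : ℂ) * ((∏ i, va j (f i)) * (∏ i, (starRingEnd ℂ) (va j (g i)))))).symm
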